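/- Let α be irrational and let N ≥ 0 have Ostrowski expansion N = ∑_{k=0}^∞ b_k q_k with respect to the convergent denominators q_k of α. Then P_N(α) = ∏_{k=0}^∞ ∏_{b=0}^{b_k - 1} P_{q_k}(α, b q_k δ_k + ε_k(N)), where P_{q}(α, x) := ∏_{n=1}^{q} |2 sin(π(n α + (-1)^k x / q_k))| is the perturbed Sudler product and ε_k(N) := q_k ∑_{ℓ=k+1}^∞ (-1)^{k+ℓ} b_ℓ δ_ℓ. -/

import Mathlib

/-- The Sudler product `P_N(α) = ∏_{n=1}^N |2 sin(π n α)|`. -/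
noncomputable def sudler (N : ℕ) (α : ℝ) : ℝ :=
  ∏ n ∈ Finset.Icc 1 N, |2 * Real.sin (Real.pi * n * α)|

/-- The perturbed Sudler product
    `P_{q_k}(α, x) = ∏_{n=1}^{q_k} |2 sin(π(n α + (-1)^k x / q_k))|`. -/
noncomputable def sudlerPert (qk : ℕ) (k : ℕ) (α x : ℝ) : ℝ :=
  ∏ n ∈ Finset.Icc 1 qk, |2 * Real.sin (Real.pi * ((n : ℝ) * α + (-1 : ℝ) ^ k * x / qk))|

open Finset

theorem shiftLem (f : ℕ → ℝ) (c q : ℕ) :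
    ∏ n ∈ Icc 1 q, f (n + c) = ∏ m ∈ Ioc c (c + q), f m := by
  rw [← Finset.Ico_add_one_right_eq_Icc, ← Finset.Ico_add_one_add_one_eq_Ioc]
  rw [Finset.prod_Ico_eq_prod_range, Finset.prod_Ico_eq_prod_range]
  have h1 : q + 1 - 1 = q := by omega
  have h2 : c + q + 1 - (c + 1) = q := by omega
  rw [h1, h2]
  exact Finset.prod_congr rfl fun x _ => by congr 1; omega

theorem blockLem (f : ℕ → ℝ) (qk c B : ℕ) :
    ∏ j ∈ range B, ∏ m ∈ Ioc (c + j * qk) (c + j * qk + qk), f m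
      = ∏ m ∈ Ioc c (c + B * qk), f m := by
  induction B with
  | zero => simp
  | succ B ih =>
      rw [Finset.prod_range_succ, ih,
        Finset.prod_Ioc_consecutive f (by omega : c ≤ c + B * qk)
          (by omega : c + B * qk ≤ c + B * qk + qk)]
      have h : c + B * qk + qk = c + (B + 1) * qk := by ring
      rw [h]

theorem telescopeLem (f : ℕ → ℝ) (T : ℕ → ℕ) (hT : ∀ k, T (k + 1) ≤ T k) (K : ℕ) :
    ∏ k ∈ range K, ∏ m ∈ Ioc (T (k + 1)) (T k), f m = ∏ m ∈ Ioc (T K) (T 0), f m := by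
  induction K with
  | zero => simp
  | succ K ih =>
      have h2 : T K ≤ T 0 := antitone_nat_of_succ_le hT (Nat.zero_le K)
      rw [Finset.prod_range_succ, ih, mul_comm,
        Finset.prod_Ioc_consecutive f (hT K) h2]

theorem absSinLem (α : ℝ) (m : ℕ) (M : ℤ) :
    |2 * Real.sin (Real.pi * ((m : ℝ) * α - (M : ℝ)))| = |2 * Real.sin (Real.pi * m * α)| := by
  have h : Real.pi * ((m : ℝ) * α - (M : ℝ)) = Real.pi * m * α - (M : ℝ) * Real.pi := by ring
  rw [h, Real.sin_sub_int_mul_pi, abs_mul, abs_mul, abs_mul]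
  rcases Int.even_or_odd M with hM | hM
  · rw [hM.neg_one_zpow]; simp
  · rw [hM.neg_one_zpow]; simp

/-- Factorization of the Sudler product along the Ostrowski expansion
    `N = ∑_k b_k q_k`:
    `P_N(α) = ∏_k ∏_{j=0}^{b_k-1} P_{q_k}(α, j q_k δ_k + ε_k(N))`, where
    `ε_k(N) = q_k ∑_{ℓ>k} (-1)^{k+ℓ} b_ℓ δ_ℓ`. -/
theorem sudler_ostrowski_factorization (α : ℝ) (hα : Irrational α)
    (a : ℕ → ℕ) (p : ℕ → ℤ) (q : ℕ → ℕ) (K : ℕ)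
    (ha : ∀ k, 1 ≤ k → 1 ≤ a k) (hqpos : ∀ k, 0 < q k)
    (hq0 : q 0 = 1) (hq1 : q 1 = a 1)
    (hqrec : ∀ k, 2 ≤ k → q k = a k * q (k - 1) + q (k - 2))
    (δ : ℕ → ℝ) (hδ : ∀ k, δ k = (-1 : ℝ) ^ k * ((q k : ℝ) * α - (p k : ℝ)))
    (b : ℕ → ℕ)
    (hb0 : b 0 ≤ a 1 - 1)
    (hbk : ∀ k, 1 ≤ k → b k ≤ a (k + 1))
    (hrule : ∀ k, 1 ≤ k → b k = a (k + 1) → b (k - 1) = 0)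
    (N : ℕ) (hN : N = ∑ k ∈ Finset.range K, b k * q k) :
    sudler N α =
      ∏ k ∈ Finset.range K, ∏ j ∈ Finset.range (b k),
        sudlerPert (q k) k α
          ((j : ℝ) * (q k : ℝ) * δ k +
            (q k : ℝ) * ∑ ℓ ∈ Finset.Ioo k K, (-1 : ℝ) ^ (k + ℓ) * (b ℓ : ℝ) * δ ℓ) := by
  classical
  let f : ℕ → ℝ := fun m => |2 * Real.sin (Real.pi * m * α)|
  let T : ℕ → ℕ := fun k => ∑ ℓ ∈ Finset.Ico k K, b ℓ * q ℓ
  have hTmono : ∀ k, T (k + 1) ≤ T k := fun k =>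
    Finset.sum_le_sum_of_subset (Finset.Ico_subset_Ico (Nat.le_succ k) le_rfl)
  have hTK : T K = 0 := by
    show (∑ ℓ ∈ Finset.Ico K K, b ℓ * q ℓ) = 0
    simp
  have hT0 : T 0 = N := by
    show (∑ ℓ ∈ Finset.Ico 0 K, b ℓ * q ℓ) = N
    rw [hN, Finset.range_eq_Ico]
  have hTstep : ∀ k, k < K → T k = b k * q k + T (k + 1) := by
    intro k hk
    show (∑ ℓ ∈ Finset.Ico k K, b ℓ * q ℓ)
        = b k * q k + ∑ ℓ ∈ Finset.Ico (k + 1) K, b ℓ * q ℓ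
    have h := Finset.sum_Ico_consecutive (fun ℓ => b ℓ * q ℓ) (Nat.le_succ k) hk
    rw [← h]
    simp
  have hsud : sudler N α = ∏ m ∈ Finset.Ioc (T K) (T 0), f m := by
    rw [hTK, hT0, sudler, ← Finset.Icc_add_one_left_eq_Ioc]; rfl
  rw [hsud, ← telescopeLem f T hTmono K]
  refine Finset.prod_congr rfl fun k hk => ?_
  have hkK : k < K := Finset.mem_range.mp hk
  have hstep : T k = T (k + 1) + b k * q k := by rw [hTstep k hkK]; ring
  rw [hstep, ← blockLem f (q k) (T (k + 1)) (b k)]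
  refine Finset.prod_congr rfl fun j hj => ?_
  rw [show T (k + 1) + j * q k + q k = (T (k + 1) + j * q k) + q k from rfl,
    ← shiftLem f (T (k + 1) + j * q k) (q k)]
  unfold sudlerPert
  refine Finset.prod_congr rfl fun n hn => ?_
  -- pointwise identity
  have hqk : ((q k : ℝ)) ≠ 0 := Nat.cast_ne_zero.mpr (hqpos k).ne'
  set S : ℝ := ∑ ℓ ∈ Finset.Ioo k K, (b ℓ : ℝ) * ((q ℓ : ℝ) * α - (p ℓ : ℝ)) with hS
  have heven : ((-1 : ℝ) ^ k) * ((-1 : ℝ) ^ k) = 1 := by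
    rw [← pow_add]; exact Even.neg_one_pow ⟨k, rfl⟩
  have hδk : (-1 : ℝ) ^ k * δ k = (q k : ℝ) * α - (p k : ℝ) := by
    rw [hδ k, ← mul_assoc, heven, one_mul]
  have hsum : ∑ ℓ ∈ Finset.Ioo k K, (-1 : ℝ) ^ (k + ℓ) * (b ℓ : ℝ) * δ ℓ
      = (-1 : ℝ) ^ k * S := by
    rw [hS, Finset.mul_sum]
    refine Finset.sum_congr rfl fun ℓ _ => ?_
    rw [hδ ℓ]
    have h1 : (-1 : ℝ) ^ (k + ℓ) * (-1 : ℝ) ^ ℓ = (-1 : ℝ) ^ k := by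
      rw [← pow_add]
      have h2 : k + ℓ + ℓ = k + 2 * ℓ := by ring
      rw [h2, pow_add, pow_mul]
      norm_num
    calc (-1 : ℝ) ^ (k + ℓ) * (b ℓ : ℝ) * ((-1 : ℝ) ^ ℓ * ((q ℓ : ℝ) * α - (p ℓ : ℝ)))
        = ((-1 : ℝ) ^ (k + ℓ) * (-1 : ℝ) ^ ℓ) * ((b ℓ : ℝ) * ((q ℓ : ℝ) * α - (p ℓ : ℝ))) := by
          ring
      _ = (-1 : ℝ) ^ k * ((b ℓ : ℝ) * ((q ℓ : ℝ) * α - (p ℓ : ℝ))) := by rw [h1]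
  set M : ℤ := (j : ℤ) * p k + ∑ ℓ ∈ Finset.Ioo k K, (b ℓ : ℤ) * p ℓ with hM
  have hTcast : ((T (k + 1) : ℕ) : ℝ) = ∑ ℓ ∈ Finset.Ioo k K, (b ℓ : ℝ) * (q ℓ : ℝ) := by
    show ((∑ ℓ ∈ Finset.Ico (k + 1) K, b ℓ * q ℓ : ℕ) : ℝ) = _
    rw [Finset.Ico_add_one_left_eq_Ioo]
    push_cast
    rfl
  have hMcast : ((M : ℤ) : ℝ) = (j : ℝ) * (p k : ℝ) + ∑ ℓ ∈ Finset.Ioo k K, (b ℓ : ℝ) * (p ℓ : ℝ) := by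
    rw [hM]; push_cast; rfl
  have hcomb : (∑ ℓ ∈ Finset.Ioo k K, (b ℓ : ℝ) * (q ℓ : ℝ)) * α
      - ∑ ℓ ∈ Finset.Ioo k K, (b ℓ : ℝ) * (p ℓ : ℝ) = S := by
    rw [hS, Finset.sum_mul, ← Finset.sum_sub_distrib]
    exact Finset.sum_congr rfl fun ℓ _ => by ring
  have harg : (n : ℝ) * α + (-1 : ℝ) ^ k *
        ((j : ℝ) * (q k : ℝ) * δ k +
          (q k : ℝ) * ∑ ℓ ∈ Finset.Ioo k K, (-1 : ℝ) ^ (k + ℓ) * (b ℓ : ℝ) * δ ℓ) / (q k : ℝ)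
      = ((n + (T (k + 1) + j * q k) : ℕ) : ℝ) * α - (M : ℝ) := by
    rw [hsum]
    have hkey : (-1 : ℝ) ^ k *
        ((j : ℝ) * (q k : ℝ) * δ k + (q k : ℝ) * ((-1 : ℝ) ^ k * S)) / (q k : ℝ)
        = (j : ℝ) * ((q k : ℝ) * α - (p k : ℝ)) + S := by
      rw [div_eq_iff hqk]
      calc (-1 : ℝ) ^ k * ((j : ℝ) * (q k : ℝ) * δ k + (q k : ℝ) * ((-1 : ℝ) ^ k * S))
          = ((j : ℝ) * ((-1 : ℝ) ^ k * δ k) + (((-1 : ℝ) ^ k) * ((-1 : ℝ) ^ k)) * S) * (q k : ℝ) := by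
            ring
        _ = ((j : ℝ) * ((q k : ℝ) * α - (p k : ℝ)) + S) * (q k : ℝ) := by rw [hδk, heven, one_mul]
    rw [hkey]
    push_cast [hTcast, hMcast]
    rw [← hcomb]
    ring
  rw [harg]
  exact (absSinLem α _ M).symm
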